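/- Let D be a DAG on a finite vertex set V with distinct nonadjacent nodes v and w (neither v → w nor w → v is an edge of D), and let D' be the directed graph obtained from D by adding the edge v → w. Then D' is a DAG that is unconditionally equivalent to D if and only if the ordered pair (v, w) is partially weakly covered in D or implied by transitivity in D. -/

import Mathlib

namespace UEC

variable {V : Type*}

/-- A directed graph is a DAG if it has no directed cycles. -/
def IsDAG (D : Digraph V) : Prop := ∀ v : V, ¬ Relation.TransGen D.Adj v v

/-- `an D v` : the set of ancestors of `v` (nodes with a directed path to `v`),
including `v` itself. -/
def an (D : Digraph V) (v : V) : Set V := {u | Relation.ReflTransGen D.Adj u v}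

/-- `de D v` : the set of descendants of `v` (nodes reachable by a directed path
from `v`), including `v` itself. -/
def de (D : Digraph V) (v : V) : Set V := {u | Relation.ReflTransGen D.Adj v u}

/-- `pa D v` : the set of parents of `v`. -/
def pa (D : Digraph V) (v : V) : Set V := {u | D.Adj u v}

/-- A source node is a node with no parents. -/
def IsSource (D : Digraph V) (v : V) : Prop := pa D v = ∅

/-- `sources D` : the set of source nodes of `D` (denoted `ma_D(V)` in the paper). -/
def sources (D : Digraph V) : Set V := {v | IsSource D v}

/-- Ancestors of a set of nodes. -/
def anSet (D : Digraph V) (A : Set V) : Set V := ⋃ a ∈ A, an D a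

/-- `maSet D A = {u ∈ an_D(A) : an_D(u) = {u}}`, the source nodes that are
ancestors of `A`. -/
def maSet (D : Digraph V) (A : Set V) : Set V :=
  {u | u ∈ anSet D A ∧ an D u = {u}}

/-- Two nodes are adjacent in a digraph if there is an edge between them in
either direction. -/
def Adjacent (D : Digraph V) (v w : V) : Prop := D.Adj v w ∨ D.Adj w v

/-- A trek in `D` is a path over distinct vertices (given as the list of its
vertices, consecutive ones being adjacent) containing no collider
`p i → p (i+1) ← p (i+2)` as a subpath. -/
def IsTrekList (D : Digraph V) (p : List V) : Prop :=
  p.Nodup ∧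
    (∀ i : ℕ, (h : i + 1 < p.length) →
      (D.Adj (p.get ⟨i, by omega⟩) (p.get ⟨i + 1, h⟩) ∨
        D.Adj (p.get ⟨i + 1, h⟩) (p.get ⟨i, by omega⟩))) ∧
    (∀ i : ℕ, (h : i + 2 < p.length) →
      ¬(D.Adj (p.get ⟨i, by omega⟩) (p.get ⟨i + 1, by omega⟩) ∧
        D.Adj (p.get ⟨i + 2, h⟩) (p.get ⟨i + 1, by omega⟩)))

/-- There is a trek between `v` and `w` in `D`. -/
def HasTrek (D : Digraph V) (v w : V) : Prop :=
  ∃ p : List V, IsTrekList D p ∧ p.head? = some v ∧ p.getLast? = some w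

/-- Adjacency in the unconditional dependence graph `U^D` : two distinct nodes
are adjacent iff there is a trek between them. -/
def UAdj (D : Digraph V) (v w : V) : Prop :=
  v ≠ w ∧ (HasTrek D v w ∨ HasTrek D w v)

/-- Two digraphs on the same vertex set are unconditionally equivalent if for
all distinct nodes there is a trek between them in one iff there is one in the
other. -/
def UncondEquiv (D D' : Digraph V) : Prop :=
  ∀ v w : V, v ≠ w → (HasTrek D v w ↔ HasTrek D' v w)

/-- The digraph obtained by adding the edge `v → w`. -/
def addEdge (D : Digraph V) (v w : V) : Digraph V :=
  ⟨fun a b => D.Adj a b ∨ (a = v ∧ b = w)⟩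

/-- The digraph obtained by deleting the edge `v → w`. -/
def delEdge (D : Digraph V) (v w : V) : Digraph V :=
  ⟨fun a b => D.Adj a b ∧ ¬(a = v ∧ b = w)⟩

/-- The digraph obtained by replacing the edge `v → w` with `w → v`. -/
def revEdge (D : Digraph V) (v w : V) : Digraph V :=
  ⟨fun a b => (D.Adj a b ∧ ¬(a = v ∧ b = w)) ∨ (a = w ∧ b = v)⟩

/-- The ordered pair `(v, w)` is partially weakly covered in `D`. -/
def PartiallyWeaklyCovered (D : Digraph V) (v w : V) : Prop :=
  maSet D {v} ⊆ maSet D {w} ∧ v ∉ an D w ∧ w ∉ an D v ∧ pa D v ≠ ∅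

/-- The ordered pair `(v, w)` is implied by transitivity in `D`, i.e.
`v ∈ an_D(w) \ ({w} ∪ pa_D(w))`. -/
def ImpliedByTransitivity (D : Digraph V) (v w : V) : Prop :=
  v ∈ an D w \ ({w} ∪ pa D w)

/-- The edge `v → w` is weakly covered in `D`. -/
def WeaklyCovered (D : Digraph V) (v w : V) : Prop :=
  maSet D (pa D v) = maSet D (pa D w \ {v}) ∧ v ∉ anSet D (pa D w \ {v})

section Lemmas
variable {V : Type*} {D : Digraph V}

lemma no_two_cycle (hD : IsDAG D) {a b : V} (h1 : D.Adj a b) (h2 : D.Adj b a) : False :=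
  hD a (Relation.TransGen.head h1 (Relation.TransGen.single h2))

lemma reach_seg (r : V → V → Prop) (l : List V) :
    ∀ j (i : ℕ) (hij : i ≤ j) (hj : j < l.length),
      (∀ m (h1 : i ≤ m) (h2 : m + 1 ≤ j), r (l[m]'(by omega)) (l[m+1]'(by omega))) →
      Relation.ReflTransGen r (l[i]'(by omega)) (l[j]'(by omega)) := by
  intro j
  induction j with
  | zero =>
    intro i hi hj _
    have : i = 0 := by omega
    subst this; exact Relation.ReflTransGen.refl
  | succ n ih =>
    intro i hij hj hstep
    rcases Nat.eq_or_lt_of_le hij with h | h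
    · subst h; exact Relation.ReflTransGen.refl
    · have := ih i (by omega) (by omega) (fun m hm hm2 => hstep m hm (by omega))
      exact this.tail (hstep n (by omega) (by omega))
end Lemmas
section Lemmas2
variable {V : Type*} {D : Digraph V}

lemma trek_common_anc {l : List V} {x y : V} (ht : IsTrekList D l)
    (hh : l.head? = some x) (hl : l.getLast? = some y) :
    ∃ u, u ∈ an D x ∧ u ∈ an D y := by
  classical
  obtain ⟨hnd, hadj, hnc⟩ := ht
  simp only [List.get_eq_getElem] at hadj hnc
  have hne : l ≠ [] := by rintro rfl; simp at hh
  have hn : 0 < l.length := List.length_pos_iff.2 hne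
  have hx : l[0]'hn = x := by
    cases l with
    | nil => simp at hh
    | cons a t => simp at hh; simp [hh]
  have hy : l[l.length - 1]'(by omega) = y := by
    rw [List.getLast?_eq_getElem?] at hl
    rw [List.getElem?_eq_getElem (by omega)] at hl
    exact Option.some_injective _ hl
  set n := l.length with hnn
  by_cases hF : ∃ i, ∃ (h : i + 1 < n), D.Adj (l[i]'(by omega)) (l[i+1]'h)
  · set k := Nat.find hF with hkdef
    obtain ⟨hk1, hkadj⟩ := Nat.find_spec hF
    -- forward propagation
    have hfwd : ∀ m (h1 : k ≤ m) (h2 : m + 1 < n), D.Adj (l[m]'(by omega)) (l[m+1]'h2) := by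
      intro m h1 h2
      induction m, h1 using Nat.le_induction with
      | base => exact hkadj
      | succ m hkm ih =>
        have ihm := ih (by omega)
        rcases hadj (m+1) h2 with h | h
        · exact h
        · exact absurd ⟨ihm, h⟩ (hnc m (by omega))
    refine ⟨l[k]'(by omega), ?_, ?_⟩
    · -- l[k] →* l[0] = x
      have := reach_seg (fun a b => D.Adj b a) l k 0 (by omega) (by omega)
        (fun m hm hm2 => by
          rcases hadj m (by omega) with h | h
          · exact absurd ⟨by omega, h⟩ (Nat.find_min hF (m := m) (by omega))
          · exact h)
      rw [← hx]
      exact (Relation.reflTransGen_swap (r := D.Adj)).1 this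
    · rw [← hy]
      exact reach_seg D.Adj l (n-1) k (by omega) (by omega)
        (fun m hm hm2 => hfwd m hm (by omega))
  · push_neg at hF
    refine ⟨y, ?_, Relation.ReflTransGen.refl⟩
    have := reach_seg (fun a b => D.Adj b a) l (n-1) 0 (by omega) (by omega)
      (fun m hm hm2 => by
        rcases hadj m (by omega) with h | h
        · exact absurd h (hF m (by omega))
        · exact h)
    rw [← hx, ← hy]
    exact (Relation.reflTransGen_swap (r := D.Adj)).1 this
end Lemmas2
section Lemmas3
variable {V : Type*} {D : Digraph V}

lemma exists_dup_split : ∀ (l : List V), ¬ l.Nodup →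
    ∃ (l₁ l₂ l₃ : List V) (x : V), l = l₁ ++ x :: (l₂ ++ x :: l₃) := by
  classical
  intro l
  induction l with
  | nil => intro h; exact absurd List.nodup_nil h
  | cons a t ih =>
    intro h
    by_cases ha : a ∈ t
    · obtain ⟨s, t', rfl⟩ := List.append_of_mem ha
      exact ⟨[], s, t', a, by simp⟩
    · have : ¬ t.Nodup := fun hnd => h (List.nodup_cons.2 ⟨ha, hnd⟩)
      obtain ⟨l₁, l₂, l₃, x, rfl⟩ := ih this
      exact ⟨a :: l₁, l₂, l₃, x, by simp⟩

lemma chain'_shorten {r : V → V → Prop} (l₁ l₂ l₃ : List V) (x : V)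
    (h : List.Chain' r (l₁ ++ x :: (l₂ ++ x :: l₃))) :
    List.Chain' r (l₁ ++ x :: l₃) := by
  simp only [List.Chain'] at h ⊢
  rw [List.isChain_append] at h
  obtain ⟨h1, h2, h3⟩ := h
  have h2' : List.IsChain r ((x :: l₂) ++ (x :: l₃)) := by simpa using h2
  rw [List.isChain_append] at h2'
  rw [List.isChain_append]
  exact ⟨h1, h2'.2.1, by simpa using h3⟩

lemma exists_nodup_chain' (r : V → V → Prop) :
    ∀ (n : ℕ) (l : List V), l.length ≤ n → l.Chain' r →
      ∃ l' : List V, l'.Nodup ∧ l'.Chain' r ∧ l'.head? = l.head? ∧ l'.getLast? = l.getLast? := by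
  classical
  intro n
  induction n with
  | zero =>
    intro l hl _
    have : l = [] := List.eq_nil_of_length_eq_zero (by omega)
    subst this; exact ⟨[], by simp [List.Chain']⟩
  | succ n ih =>
    intro l hl hc
    by_cases hnd : l.Nodup
    · exact ⟨l, hnd, hc, rfl, rfl⟩
    · obtain ⟨l₁, l₂, l₃, x, rfl⟩ := exists_dup_split l hnd
      have hc' := chain'_shorten l₁ l₂ l₃ x hc
      have hlen : (l₁ ++ x :: l₃).length ≤ n := by simp at hl ⊢; omega
      obtain ⟨l', hnd', hc'', hh, hg⟩ := ih _ hlen hc'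
      refine ⟨l', hnd', hc'', ?_, ?_⟩
      · rw [hh]; cases l₁ <;> simp
      · rw [hg]
        have e : l₁ ++ x :: (l₂ ++ x :: l₃) = (l₁ ++ x :: l₂) ++ (x :: l₃) := by simp
        rw [e, List.getLast?_append, List.getLast?_append]
        cases h : (x :: l₃).getLast? with
        | none => simp at h
        | some c => simp

lemma exists_nodup_path {u x : V} (h : Relation.ReflTransGen D.Adj u x) :
    ∃ l : List V, l.Nodup ∧ l.Chain' D.Adj ∧ l.head? = some u ∧ l.getLast? = some x := by
  obtain ⟨l, hc, hlast⟩ := List.exists_isChain_cons_of_relationReflTransGen h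
  have hc' : List.Chain' D.Adj (u :: l) := hc
  obtain ⟨l', h1, h2, h3, h4⟩ := exists_nodup_chain' D.Adj (u :: l).length (u :: l) le_rfl hc'
  refine ⟨l', h1, h2, by simp [h3], ?_⟩
  rw [h4, List.getLast?_eq_getLast (List.cons_ne_nil u l), hlast]

lemma split_first_mem : ∀ (P : List V) (B : List V), (∃ p ∈ P, p ∈ B) →
    ∃ l₁ z rest, P = l₁ ++ z :: rest ∧ z ∈ B ∧ ∀ a ∈ l₁, a ∉ B := by
  classical
  intro P
  induction P with
  | nil => rintro B ⟨p, hp, _⟩; simp at hp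
  | cons a t ih =>
    intro B hex
    by_cases ha : a ∈ B
    · exact ⟨[], a, t, by simp, ha, by simp⟩
    · obtain ⟨p, hp, hpB⟩ := hex
      have hp' : p ∈ t := by
        rcases List.mem_cons.1 hp with rfl | h
        · exact absurd hpB ha
        · exact h
      obtain ⟨l₁, z, rest, rfl, hz, hl₁⟩ := ih B ⟨p, hp', hpB⟩
      refine ⟨a :: l₁, z, rest, by simp, hz, ?_⟩
      intro b hb
      rcases List.mem_cons.1 hb with rfl | h
      · exact ha
      · exact hl₁ b h
end Lemmas3
section Lemmas4
variable {V : Type*} {D : Digraph V}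

lemma mem_of_getLast?_eq {l : List V} {a : V} (h : l.getLast? = some a) : a ∈ l := by
  have hne : l ≠ [] := by rintro rfl; simp at h
  rw [List.getLast?_eq_getLast hne] at h
  have := List.getLast_mem hne
  rwa [← Option.some_injective _ h]

lemma isTrek_updown (hD : IsDAG D) (l₁ l₂ : List V) (z : V)
    (h1 : List.Chain' (fun a b => D.Adj b a) (l₁ ++ [z]))
    (h2 : List.Chain' D.Adj (z :: l₂))
    (hnd : (l₁ ++ z :: l₂).Nodup) :
    IsTrekList D (l₁ ++ z :: l₂) := by
  set l := l₁ ++ z :: l₂ with hldef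
  set n₁ := l₁.length with hn₁
  have hlen : l.length = n₁ + 1 + l₂.length := by simp [hldef]; omega
  have hA : ∀ j (hj : j ≤ n₁), l[j]'(by omega) = (l₁ ++ [z])[j]'(by simp; omega) := by
    intro j hj
    rcases Nat.lt_or_ge j n₁ with h | h
    · rw [List.getElem_append_left h, List.getElem_append_left h]
    · have hj' : j = n₁ := by omega
      subst hj'
      rw [List.getElem_append_right (le_refl n₁), List.getElem_append_right (le_refl n₁)]
      simp [hn₁]
  have hB : ∀ j (hj1 : n₁ ≤ j) (hj2 : j < l.length), l[j]'hj2 = (z :: l₂)[j - n₁]'(by simp; omega) := by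
    intro j hj1 hj2
    rw [List.getElem_append_right hj1]
  simp only [List.Chain', List.isChain_iff_getElem] at h1 h2
  have hback : ∀ i (h : i + 1 ≤ n₁), D.Adj (l[i+1]'(by omega)) (l[i]'(by omega)) := by
    intro i h
    have := h1 i (by simp; omega)
    rw [hA i (by omega), hA (i+1) (by omega)]
    exact this
  have hforw : ∀ i (hi : n₁ ≤ i) (h : i + 1 < l.length), D.Adj (l[i]'(by omega)) (l[i+1]'h) := by
    intro i hi h
    have := h2 (i - n₁) (by simp; omega)
    rw [hB i hi (by omega), hB (i+1) (by omega) h]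
    have e : i + 1 - n₁ = (i - n₁) + 1 := by omega
    simpa only [e] using this
  refine ⟨hnd, ?_, ?_⟩
  · intro i h
    simp only [List.get_eq_getElem]
    rcases Nat.lt_or_ge i n₁ with hc | hc
    · exact Or.inr (hback i (by omega))
    · exact Or.inl (hforw i hc h)
  · intro i h
    simp only [List.get_eq_getElem]
    rintro ⟨hf, hb⟩
    rcases Nat.lt_or_ge i n₁ with hc | hc
    · exact no_two_cycle hD hf (hback i (by omega))
    · exact no_two_cycle hD hb (hforw (i+1) (by omega) (by omega))

lemma hasTrek_of_commonAnc (hD : IsDAG D) {u x y : V}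
    (hux : Relation.ReflTransGen D.Adj u x) (huy : Relation.ReflTransGen D.Adj u y) :
    HasTrek D x y := by
  obtain ⟨A, hAnd, hAc, hAh, hAl⟩ := exists_nodup_path hux
  obtain ⟨B, hBnd, hBc, hBh, hBl⟩ := exists_nodup_path huy
  set P := A.reverse with hPdef
  have hPnd : P.Nodup := List.nodup_reverse.2 hAnd
  have hPc : List.Chain' (fun a b => D.Adj b a) P := by
    rw [hPdef]
    simp only [List.Chain', List.isChain_reverse]
    exact hAc
  have hPh : P.head? = some x := by rw [hPdef, List.head?_reverse]; exact hAl
  have hPl : P.getLast? = some u := by rw [hPdef, List.getLast?_reverse]; exact hAh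
  have huP : u ∈ P := mem_of_getLast?_eq hPl
  have huB : u ∈ B := List.mem_of_mem_head? (by rw [hBh]; simp)
  obtain ⟨l₁, z, rest, hPeq, hzB, hl₁B⟩ := split_first_mem P B ⟨u, huP, huB⟩
  obtain ⟨B₁, B₂, hBeq⟩ := List.append_of_mem hzB
  refine ⟨l₁ ++ z :: B₂, ?_, ?_, ?_⟩
  · apply isTrek_updown hD
    · exact hPc.prefix ⟨rest, by rw [hPeq]; simp⟩
    · exact hBc.suffix ⟨B₁, by rw [hBeq]⟩
    · rw [List.nodup_append]
      refine ⟨hPnd.sublist (by rw [hPeq]; exact (List.prefix_append _ _).sublist), ?_, ?_⟩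
      · exact hBnd.sublist (by rw [hBeq]; exact List.sublist_append_right B₁ _)
      · intro a ha b hb hab
        subst hab
        exact hl₁B a ha (by rw [hBeq]; exact List.mem_append_right B₁ hb)
  · rw [← hPh, hPeq]
    cases l₁ <;> simp
  · rw [← hBl, hBeq, List.getLast?_append, List.getLast?_append]
    rw [List.getLast?_eq_getLast (List.cons_ne_nil z B₂)]
    rfl
end Lemmas4
section Lemmas5
variable {V : Type*} {D : Digraph V}

lemma hasTrek_iff (hD : IsDAG D) (x y : V) :
    HasTrek D x y ↔ ∃ u, Relation.ReflTransGen D.Adj u x ∧ Relation.ReflTransGen D.Adj u y := by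
  constructor
  · rintro ⟨p, hp, hh, hl⟩
    exact trek_common_anc hp hh hl
  · rintro ⟨u, h1, h2⟩
    exact hasTrek_of_commonAnc hD h1 h2

lemma addEdge_adj {v w a b : V} :
    (addEdge D v w).Adj a b ↔ D.Adj a b ∨ (a = v ∧ b = w) := Iff.rfl

lemma reflTransGen_addEdge {v w a b : V}
    (h : Relation.ReflTransGen (addEdge D v w).Adj a b) :
    Relation.ReflTransGen D.Adj a b ∨
      (Relation.ReflTransGen D.Adj a v ∧ Relation.ReflTransGen D.Adj w b) := by
  induction h using Relation.ReflTransGen.head_induction_on with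
  | refl => exact Or.inl Relation.ReflTransGen.refl
  | head hadj _ ih =>
    rename_i a' c _
    rcases hadj with hadj | ⟨rfl, rfl⟩
    · rcases ih with ih | ⟨ih1, ih2⟩
      · exact Or.inl (Relation.ReflTransGen.head hadj ih)
      · exact Or.inr ⟨Relation.ReflTransGen.head hadj ih1, ih2⟩
    · rcases ih with ih | ⟨_, ih2⟩
      · exact Or.inr ⟨Relation.ReflTransGen.refl, ih⟩
      · exact Or.inr ⟨Relation.ReflTransGen.refl, ih2⟩

lemma transGen_addEdge {v w a b : V}
    (h : Relation.TransGen (addEdge D v w).Adj a b) :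
    Relation.TransGen D.Adj a b ∨
      (Relation.ReflTransGen D.Adj a v ∧ Relation.ReflTransGen D.Adj w b) := by
  induction h using Relation.TransGen.head_induction_on with
  | single hadj =>
    rcases hadj with hadj | ⟨rfl, rfl⟩
    · exact Or.inl (Relation.TransGen.single hadj)
    · exact Or.inr ⟨Relation.ReflTransGen.refl, Relation.ReflTransGen.refl⟩
  | head hadj _ ih =>
    rcases hadj with hadj | ⟨rfl, rfl⟩
    · rcases ih with ih | ⟨ih1, ih2⟩
      · exact Or.inl (Relation.TransGen.head hadj ih)
      · exact Or.inr ⟨Relation.ReflTransGen.head hadj ih1, ih2⟩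
    · rcases ih with ih | ⟨_, ih2⟩
      · exact Or.inr ⟨Relation.ReflTransGen.refl, ih.to_reflTransGen⟩
      · exact Or.inr ⟨Relation.ReflTransGen.refl, ih2⟩

lemma addEdge_isDAG (hD : IsDAG D) {v w : V} (hw : ¬ Relation.ReflTransGen D.Adj w v) :
    IsDAG (addEdge D v w) := by
  intro a hcyc
  rcases transGen_addEdge hcyc with h | ⟨h1, h2⟩
  · exact hD a h
  · exact hw (h2.trans h1)

lemma an_eq_singleton_of_pa_empty {x : V} (hpa : pa D x = ∅) : an D x = {x} := by
  ext u
  simp only [Set.mem_singleton_iff]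
  constructor
  · intro h
    rcases Relation.ReflTransGen.cases_tail h with h | ⟨c, _, hc⟩
    · exact h.symm
    · exact absurd hc (by intro hc'; exact Set.eq_empty_iff_forall_notMem.1 hpa c hc')
  · rintro rfl; exact Relation.ReflTransGen.refl

lemma mem_maSet_singleton {s x : V} :
    s ∈ maSet D {x} ↔ s ∈ an D x ∧ an D s = {s} := by
  simp [maSet, anSet]

lemma exists_source_anc [Fintype V] (hD : IsDAG D) (x : V) :
    ∃ s, s ∈ an D x ∧ an D s = {s} := by
  have hirr : IsIrrefl V (Relation.TransGen D.Adj) := ⟨fun a h => hD a h⟩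
  have htr : IsTrans V (Relation.TransGen D.Adj) := ⟨fun _ _ _ h1 h2 => h1.trans h2⟩
  have hwf : WellFounded D.Adj :=
    Subrelation.wf (fun h => Relation.TransGen.single h)
      (Finite.wellFounded_of_trans_of_irrefl (Relation.TransGen D.Adj))
  induction x using hwf.induction with
  | _ x ih =>
    by_cases hpa : pa D x = ∅
    · exact ⟨x, Relation.ReflTransGen.refl, an_eq_singleton_of_pa_empty hpa⟩
    · obtain ⟨p, hp⟩ := Set.nonempty_iff_ne_empty.2 hpa
      obtain ⟨s, hs1, hs2⟩ := ih p hp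
      exact ⟨s, hs1.tail hp, hs2⟩
end Lemmas5
/-- Let `v, w` be distinct nonadjacent nodes of a DAG `D` and
let `D'` be `D` with the edge `v → w` added.  Then `D'` is a DAG
unconditionally equivalent to `D` iff `(v, w)` is partially weakly covered or
implied by transitivity in `D`. -/
theorem addEdge_uncondEquiv_iff [Fintype V] (D : Digraph V) (hD : IsDAG D)
    (v w : V) (hvw : v ≠ w) (hnadj : ¬ Adjacent D v w) :
    (IsDAG (addEdge D v w) ∧ UncondEquiv D (addEdge D v w)) ↔
      (PartiallyWeaklyCovered D v w ∨ ImpliedByTransitivity D v w) := by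
  set D' := addEdge D v w with hD'def
  constructor
  · rintro ⟨hDAG', hEq⟩
    have hwv : ¬ Relation.ReflTransGen D.Adj w v := by
      intro h
      exact hDAG' v (Relation.TransGen.head' (Or.inr ⟨rfl, rfl⟩)
        (Relation.ReflTransGen.mono (fun a b hab => Or.inl hab) _ _ h))
    by_cases hv : Relation.ReflTransGen D.Adj v w
    · right
      refine ⟨hv, ?_⟩
      rintro (h | h)
      · exact hvw h
      · exact hnadj (Or.inl h)
    · left
      have key : ∀ s, Relation.ReflTransGen D.Adj s v → an D s = {s} →
          Relation.ReflTransGen D.Adj s w := by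
        intro s hsv hss
        have hsw : s ≠ w := by rintro rfl; exact hwv hsv
        have htrek' : HasTrek D' s w :=
          hasTrek_of_commonAnc hDAG' Relation.ReflTransGen.refl
            ((Relation.ReflTransGen.mono (fun a b hab => Or.inl hab) _ _ hsv).tail (Or.inr ⟨rfl, rfl⟩))
        obtain ⟨u, hu1, hu2⟩ := (hasTrek_iff hD s w).1 ((hEq s w hsw).2 htrek')
        have hu : u = s := by rw [← Set.mem_singleton_iff, ← hss]; exact hu1
        subst hu
        exact hu2
      refine ⟨?_, hv, hwv, ?_⟩
      · intro s hs
        rw [mem_maSet_singleton] at hs ⊢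
        exact ⟨key s hs.1 hs.2, hs.2⟩
      · intro hpa
        exact hv (key v Relation.ReflTransGen.refl (an_eq_singleton_of_pa_empty hpa))
  · intro hcase
    have hwv : ¬ Relation.ReflTransGen D.Adj w v := by
      rcases hcase with ⟨_, _, hwv, _⟩ | ⟨hv, _⟩
      · exact hwv
      · intro h
        rcases Relation.ReflTransGen.cases_head hv with heq | ⟨c, hc1, hc2⟩
        · exact hvw heq
        · exact hD v ((Relation.TransGen.head' hc1 hc2).trans_left h)
    have hDAG' : IsDAG D' := addEdge_isDAG hD hwv
    refine ⟨hDAG', ?_⟩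
    intro x y hxy
    constructor
    · intro ht
      obtain ⟨u, h1, h2⟩ := (hasTrek_iff hD x y).1 ht
      exact (hasTrek_iff hDAG' x y).2
        ⟨u, Relation.ReflTransGen.mono (fun a b hab => Or.inl hab) _ _ h1,
          Relation.ReflTransGen.mono (fun a b hab => Or.inl hab) _ _ h2⟩
    · intro ht
      obtain ⟨u, h1, h2⟩ := (hasTrek_iff hDAG' x y).1 ht
      have h1' := reflTransGen_addEdge h1
      have h2' := reflTransGen_addEdge h2
      rcases hcase with ⟨hma, _, _, _⟩ | ⟨hv, _⟩
      · obtain ⟨s, hs1, hs2⟩ := exists_source_anc hD u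
        have key : ∀ a, (Relation.ReflTransGen D.Adj u a ∨
            (Relation.ReflTransGen D.Adj u v ∧ Relation.ReflTransGen D.Adj w a)) →
            Relation.ReflTransGen D.Adj s a := by
          intro a h
          rcases h with h | ⟨huv, hwa⟩
          · exact Relation.ReflTransGen.trans hs1 h
          · have hsm : s ∈ maSet D {w} :=
              hma (mem_maSet_singleton.2 ⟨Relation.ReflTransGen.trans hs1 huv, hs2⟩)
            exact Relation.ReflTransGen.trans (mem_maSet_singleton.1 hsm).1 hwa
        exact (hasTrek_iff hD x y).2 ⟨s, key x h1', key y h2'⟩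
      · have key : ∀ a, (Relation.ReflTransGen D.Adj u a ∨
            (Relation.ReflTransGen D.Adj u v ∧ Relation.ReflTransGen D.Adj w a)) →
            Relation.ReflTransGen D.Adj u a := by
          intro a h
          rcases h with h | ⟨huv, hwa⟩
          · exact h
          · exact Relation.ReflTransGen.trans (Relation.ReflTransGen.trans huv hv) hwa
        exact (hasTrek_iff hD x y).2 ⟨u, key x h1', key y h2'⟩

end UEC
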